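/- Let Γ = (V,E) be a reflexive locally-finite k-separable graph and let A be a k-atom of Γ with |A| > k. Then for every x ∈ A, the set Γ⁻(x) ∩ A is not equal to {x}. -/

import Mathlib

open Set

/-- Image of a set under a relation (graph). -/
def RelImage {V : Type*} (Γ : V → V → Prop) (X : Set V) : Set V := {y | ∃ x ∈ X, Γ x y}

/-- Reverse relation. -/
def RelRev {V : Type*} (Γ : V → V → Prop) : V → V → Prop := fun x y => Γ y x

/-- Boundary ∂(X) = Γ(X) \ X. -/
def RelBoundary {V : Type*} (Γ : V → V → Prop) (X : Set V) : Set V := RelImage Γ X \ X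

/-- Exterior ∇(X) = V \ Γ(X). -/
def RelNabla {V : Type*} (Γ : V → V → Prop) (X : Set V) : Set V := (RelImage Γ X)ᶜ

def RelReflexive {V : Type*} (Γ : V → V → Prop) : Prop := ∀ x, Γ x x

def RelLocallyFinite {V : Type*} (Γ : V → V → Prop) : Prop :=
  ∀ x : V, (RelImage Γ {x}).Finite ∧ (RelImage (RelRev Γ) {x}).Finite

/-- The family S_k(Γ): finite X with |X| ≥ k and at least k vertices outside Γ(X). -/
def SkFam {V : Type*} (Γ : V → V → Prop) (k : ℕ) : Set (Set V) :=
  {X | X.Finite ∧ k ≤ X.ncard ∧ ∃ Y : Set V, Y.Finite ∧ Y.ncard = k ∧ Y ⊆ RelNabla Γ X}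

def RelSeparable {V : Type*} (Γ : V → V → Prop) (k : ℕ) : Prop := (SkFam Γ k).Nonempty

/-- The k-isoperimetric connectivity κ_k(Γ). -/
noncomputable def relKappa {V : Type*} (Γ : V → V → Prop) (k : ℕ) : ℕ :=
  sInf ((fun X => (RelBoundary Γ X).ncard) '' SkFam Γ k)

def IsKFragment {V : Type*} (Γ : V → V → Prop) (k : ℕ) (X : Set V) : Prop :=
  X ∈ SkFam Γ k ∧ (RelBoundary Γ X).ncard = relKappa Γ k

def IsKAtom {V : Type*} (Γ : V → V → Prop) (k : ℕ) (X : Set V) : Prop :=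
  IsKFragment Γ k X ∧ ∀ Y, IsKFragment Γ k Y → X.ncard ≤ Y.ncard

/-- Γ is k-faithful: every k-atom A satisfies |A| ≤ |V \ Γ(A)|. -/
def KFaithful {V : Type*} (Γ : V → V → Prop) (k : ℕ) : Prop :=
  ∀ A, IsKAtom Γ k A → (RelNabla Γ A).Infinite ∨ A.ncard ≤ (RelNabla Γ A).ncard

theorem stmt1 {V : Type*} (Γ : V → V → Prop) (k : ℕ)
    (hrefl : RelReflexive Γ) (hlf : RelLocallyFinite Γ) (hsep : RelSeparable Γ k)
    (A : Set V) (hA : IsKAtom Γ k A) (hcard : k < A.ncard) :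
    ∀ x ∈ A, RelImage (RelRev Γ) {x} ∩ A ≠ {x} := by
  intro x hxA hx
  obtain ⟨⟨⟨hAfin, hAk, Y, hYfin, hYk, hYsub⟩, hbd⟩, hmin⟩ := hA
  -- key: no a ∈ A \ {x} has Γ a x
  have hkey : ∀ a ∈ A, Γ a x → a = x := by
    intro a ha hax
    have : a ∈ RelImage (RelRev Γ) {x} ∩ A := ⟨⟨x, rfl, hax⟩, ha⟩
    rw [hx] at this
    exact this
  set A' := A \ {x} with hA'
  have hA'fin : A'.Finite := hAfin.diff
  have hA'card : A'.ncard = A.ncard - 1 :=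
    Set.ncard_diff_singleton_of_mem hxA
  have hApos : 1 ≤ A.ncard := lt_of_le_of_lt (Nat.zero_le k) hcard
  have himsub : RelImage Γ A' ⊆ RelImage Γ A := by
    rintro y ⟨a, ha, hay⟩
    exact ⟨a, ha.1, hay⟩
  have hxnot : x ∉ RelImage Γ A' := by
    rintro ⟨a, ha, hax⟩
    exact ha.2 (hkey a ha.1 hax)
  have hbdsub : RelBoundary Γ A' ⊆ RelBoundary Γ A := by
    rintro y ⟨hy1, hy2⟩
    have hyx : y ≠ x := fun h => hxnot (h ▸ hy1)
    exact ⟨himsub hy1, fun hyA => hy2 ⟨hyA, hyx⟩⟩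
  have himfin : (RelImage Γ A).Finite := by
    have : RelImage Γ A = ⋃ a ∈ A, RelImage Γ {a} := by
      ext y; simp [RelImage]
    rw [this]
    exact hAfin.biUnion fun a _ => (hlf a).1
  have hbdfin : (RelBoundary Γ A).Finite := himfin.subset Set.diff_subset
  have hA'mem : A' ∈ SkFam Γ k := by
    refine ⟨hA'fin, by omega, Y, hYfin, hYk, fun y hy => ?_⟩
    exact fun hyim => hYsub hy (himsub hyim)
  have hκle : relKappa Γ k ≤ (RelBoundary Γ A').ncard :=
    Nat.sInf_le ⟨A', hA'mem, rfl⟩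
  have hle : (RelBoundary Γ A').ncard ≤ (RelBoundary Γ A).ncard :=
    Set.ncard_le_ncard hbdsub hbdfin
  have hfrag : IsKFragment Γ k A' := ⟨hA'mem, le_antisymm (hbd ▸ hle) hκle⟩
  have := hmin A' hfrag
  omega
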